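/- Under the setting of the Hamiltonian error identity — u a polynomial of degree at most s with u'(ch) = Σ_{j=0}^{s−1} (γ_j − Δ_j(h)) P_j(c), γ_j = ∫₀¹ J ∇H(u(τh)) P_j(τ) dτ, J skew-symmetric, H C¹ — suppose in addition that there are constants C₁, C₂ > 0 and h₀ > 0 and an integer k ≥ s such that for all 0 < h ≤ h₀ and 0 ≤ j ≤ s−1, ‖a_j(h)‖ ≤ C₁ h^j (where a_j = ∫₀¹ ∇H(u(τh)) P_j(τ) dτ) and ‖Δ_j(h)‖ ≤ C₂ h^{2k−j}. Then there is a constant C > 0 such that |H(u(h)) − H(u(0))| ≤ C h^{2k+1} for all 0 < h ≤ h₀; i.e., the Hamiltonian error of the method is O(h^{2k+1}). -/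

import Mathlib

open MeasureTheory intervalIntegral Matrix

/-- Skew-symmetric quadratic form vanishes. -/
lemma skew_dot {n : ℕ} (J : Matrix (Fin n) (Fin n) ℝ) (hJ : J.transpose = -J)
    (v : Fin n → ℝ) : v ⬝ᵥ J.mulVec v = 0 := by
  have h2 : v ᵥ* J = -(J.mulVec v) := by
    have : v ᵥ* (Jᵀ)ᵀ = Jᵀ *ᵥ v := Matrix.vecMul_transpose Jᵀ v
    rw [Matrix.transpose_transpose, hJ, Matrix.neg_mulVec] at this
    exact this
  have h1 : v ⬝ᵥ J.mulVec v = -(J.mulVec v ⬝ᵥ v) := by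
    rw [Matrix.dotProduct_mulVec, h2, neg_dotProduct]
  rw [dotProduct_comm] at h1
  have h0 : J *ᵥ v ⬝ᵥ v = 0 := by linarith
  rw [dotProduct_comm]
  exact h0

/-- under the HBVM Hamiltonian-error setting, if `‖a_j(h)‖ ≤ C₁ h^j` and
`‖Δ_j(h)‖ ≤ C₂ h^{2k−j}` for `0 < h ≤ h₀` and `j = 0,…,s−1` (with `k ≥ s`), then the
Hamiltonian error satisfies `|H(u(h)) − H(u(0))| ≤ C h^{2k+1}` for some `C > 0`. -/
theorem stmt_7 (n s k : ℕ) (hn : 1 ≤ n) (hs : 1 ≤ s) (hsk : s ≤ k)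
    (H : (Fin n → ℝ) → ℝ) (hH : ContDiff ℝ 1 H)
    (gradH : (Fin n → ℝ) → Fin n → ℝ)
    (hgrad : ∀ y w, fderiv ℝ H y w = ∑ i, gradH y i * w i)
    (J : Matrix (Fin n) (Fin n) ℝ) (hJ : J.transpose = -J)
    (P : ℕ → Polynomial ℝ)
    (hdeg : ∀ j, (P j).degree = j)
    (horth : ∀ i j, (∫ x in (0:ℝ)..1, (P i).eval x * (P j).eval x)
      = if i = j then 1 else 0)
    (h₀ : ℝ) (hh₀ : 0 < h₀)
    (u : ℝ → ℝ → Fin n → ℝ)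
    (Δ γ a : ℝ → ℕ → Fin n → ℝ)
    (hupoly : ∀ h : ℝ, 0 < h → h ≤ h₀ →
      ∀ i, ∃ Q : Polynomial ℝ, Q.natDegree ≤ s ∧ ∀ t, u h t i = Q.eval t)
    (hγ : ∀ h : ℝ, 0 < h → h ≤ h₀ → ∀ j,
      γ h j = ∫ τ in (0:ℝ)..1, (P j).eval τ • J.mulVec (gradH (u h (τ * h))))
    (ha : ∀ h : ℝ, 0 < h → h ≤ h₀ → ∀ j,
      a h j = ∫ τ in (0:ℝ)..1, (P j).eval τ • gradH (u h (τ * h)))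
    (hu' : ∀ h : ℝ, 0 < h → h ≤ h₀ → ∀ c ∈ Set.Icc (0:ℝ) 1,
      HasDerivAt (u h) (∑ j ∈ Finset.range s, (P j).eval c • (γ h j - Δ h j)) (c * h))
    (C₁ C₂ : ℝ) (hC₁ : 0 < C₁) (hC₂ : 0 < C₂)
    (hbnda : ∀ h : ℝ, 0 < h → h ≤ h₀ → ∀ j < s, ‖a h j‖ ≤ C₁ * h ^ j)
    (hbndΔ : ∀ h : ℝ, 0 < h → h ≤ h₀ → ∀ j < s, ‖Δ h j‖ ≤ C₂ * h ^ (2*k - j)) :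
    ∃ C > 0, ∀ h : ℝ, 0 < h → h ≤ h₀ →
      |H (u h h) - H (u h 0)| ≤ C * h ^ (2*k + 1) := by
  -- continuity of gradH
  have hgradH_eq : ∀ y i, gradH y i = fderiv ℝ H y (Pi.single i 1) := by
    intro y i
    rw [hgrad]
    simp [Pi.single_apply, mul_ite, Finset.sum_ite_eq']
  have contgrad : Continuous gradH := by
    apply continuous_pi
    intro i
    have h1 : Continuous fun y => fderiv ℝ H y :=
      hH.continuous_fderiv one_ne_zero
    have : Continuous fun y => fderiv ℝ H y (Pi.single i 1) :=
      (ContinuousLinearMap.apply ℝ ℝ (Pi.single i 1)).continuous.comp h1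
    simpa [← hgradH_eq] using this
  refine ⟨(n : ℝ) * s * C₁ * C₂, by positivity, ?_⟩
  intro h hh hhh
  -- setup
  set U : ℝ → Fin n → ℝ := fun τ => u h (τ * h) with hU
  have contU : Continuous U := by
    apply continuous_pi
    intro i
    obtain ⟨Q, -, hQ⟩ := hupoly h hh hhh i
    have : (fun τ => U τ i) = fun τ => Q.eval (τ * h) := by
      funext τ; exact hQ (τ * h)
    rw [this]
    exact Q.continuous_aeval.comp (continuous_id.mul continuous_const)
  set G : ℝ → Fin n → ℝ := fun τ => gradH (U τ) with hG
  have contG : Continuous G := contgrad.comp contU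
  set D : ℝ → Fin n → ℝ :=
    fun τ => ∑ j ∈ Finset.range s, (P j).eval τ • (γ h j - Δ h j) with hD
  have contD : Continuous D := by
    apply continuous_finset_sum
    intro j _
    exact ((P j).continuous_aeval).smul continuous_const
  -- derivative of τ ↦ H (U τ)
  have hderiv : ∀ τ ∈ Set.uIcc (0:ℝ) 1,
      HasDerivAt (fun τ => H (U τ)) (h * (G τ ⬝ᵥ D τ)) τ := by
    intro τ hτ
    rw [Set.uIcc_of_le (by norm_num : (0:ℝ) ≤ 1)] at hτ
    have hUd : HasDerivAt U (h • D τ) τ := by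
      have h1 : HasDerivAt (fun τ : ℝ => τ * h) h τ := by
        simpa using (hasDerivAt_id τ).mul_const h
      exact (hu' h hh hhh τ hτ).scomp τ h1
    have hHd : HasFDerivAt H (fderiv ℝ H (U τ)) (U τ) :=
      ((hH.differentiable one_ne_zero) (U τ)).hasFDerivAt
    have := hHd.comp_hasDerivAt τ hUd
    refine this.congr_deriv ?_; symm
    rw [hgrad]
    simp only [Pi.smul_apply, smul_eq_mul, dotProduct, Finset.mul_sum]
    apply Finset.sum_congr rfl
    intro i _; ring
  -- continuity of the dot product integrand
  have contdot : Continuous fun τ => G τ ⬝ᵥ D τ := by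
    simp only [dotProduct]
    exact continuous_finset_sum _ fun i _ =>
      ((continuous_apply i).comp contG).mul ((continuous_apply i).comp contD)
  -- FTC
  have hFTC : H (U 1) - H (U 0) = ∫ τ in (0:ℝ)..1, h * (G τ ⬝ᵥ D τ) :=
    (intervalIntegral.integral_eq_sub_of_hasDerivAt hderiv
      ((continuous_const.mul contdot).intervalIntegrable 0 1)).symm
  -- componentwise interval integrals
  have comp_int : ∀ (f : ℝ → Fin n → ℝ), Continuous f → ∀ i : Fin n,
      (∫ τ in (0:ℝ)..1, f τ) i = ∫ τ in (0:ℝ)..1, f τ i := by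
    intro f hf i
    exact (ContinuousLinearMap.proj (R := ℝ) (φ := fun _ : Fin n => ℝ) i).intervalIntegral_comp_comm
      (hf.intervalIntegrable 0 1) |>.symm
  have contPG : ∀ j, Continuous fun τ => (P j).eval τ • G τ :=
    fun j => ((P j).continuous_aeval).smul contG
  -- components of a
  have ha' : ∀ j, ∀ i : Fin n, a h j i = ∫ τ in (0:ℝ)..1, (P j).eval τ * G τ i := by
    intro j i
    rw [ha h hh hhh j]
    rw [comp_int _ (contPG j) i]
    simp [smul_eq_mul]
  -- γ = J ∘ a
  have hγa : ∀ j, γ h j = J.mulVec (a h j) := by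
    intro j
    set L : (Fin n → ℝ) →L[ℝ] (Fin n → ℝ) := (Matrix.mulVecLin J).toContinuousLinearMap with hL
    have e1 : (fun τ => (P j).eval τ • J.mulVec (gradH (u h (τ * h))))
        = fun τ => L ((P j).eval τ • G τ) := by
      funext τ
      rw [L.map_smul]
      simp [hL, Matrix.mulVecLin_apply, hG, hU]
    rw [hγ h hh hhh j, ha h hh hhh j, e1,
      L.intervalIntegral_comp_comm ((contPG j).intervalIntegrable 0 1)]
    simp [hL, Matrix.mulVecLin_apply, hG, hU]
  -- compute the integral
  have key : (∫ τ in (0:ℝ)..1, h * (G τ ⬝ᵥ D τ))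
      = h * ∑ j ∈ Finset.range s, a h j ⬝ᵥ (γ h j - Δ h j) := by
    rw [intervalIntegral.integral_const_mul]
    congr 1
    have e2 : ∀ τ : ℝ, G τ ⬝ᵥ D τ
        = ∑ j ∈ Finset.range s, ∑ i : Fin n, ((P j).eval τ * G τ i) * (γ h j - Δ h j) i := by
      intro τ
      simp only [hD, dotProduct, Finset.sum_apply, Pi.smul_apply, smul_eq_mul,
        Finset.mul_sum]
      rw [Finset.sum_comm]
      apply Finset.sum_congr rfl
      intro j _
      apply Finset.sum_congr rfl
      intro i _
      ring
    simp only [e2]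
    rw [intervalIntegral.integral_finset_sum]
    · apply Finset.sum_congr rfl
      intro j _
      rw [intervalIntegral.integral_finset_sum]
      · simp only [dotProduct]
        apply Finset.sum_congr rfl
        intro i _
        rw [intervalIntegral.integral_mul_const, ha' j i]
      · intro i _
        exact ((((P j).continuous).mul
          ((continuous_apply i).comp contG)).mul continuous_const).intervalIntegrable 0 1
    · intro j _
      apply Continuous.intervalIntegrable
      exact continuous_finset_sum _ fun i _ =>
        (((P j).continuous).mul ((continuous_apply i).comp contG)).mul continuous_const
  -- kill the γ terms
  have key2 : (∫ τ in (0:ℝ)..1, h * (G τ ⬝ᵥ D τ))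
      = h * ∑ j ∈ Finset.range s, -(a h j ⬝ᵥ Δ h j) := by
    rw [key]
    congr 1
    apply Finset.sum_congr rfl
    intro j _
    rw [dotProduct_sub, hγa j, skew_dot J hJ (a h j), zero_sub]
  -- final bound
  have hval : H (u h h) - H (u h 0) = h * ∑ j ∈ Finset.range s, -(a h j ⬝ᵥ Δ h j) := by
    have h1 : U 1 = u h h := by simp [hU]
    have h0 : U 0 = u h 0 := by simp [hU]
    rw [← h1, ← h0, hFTC, key2]
  rw [hval]
  have hbound : ∀ j ∈ Finset.range s, |a h j ⬝ᵥ Δ h j| ≤ (n : ℝ) * (C₁ * C₂ * h ^ (2*k)) := by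
    intro j hj
    rw [Finset.mem_range] at hj
    have h1 : |a h j ⬝ᵥ Δ h j| ≤ ∑ i : Fin n, ‖a h j‖ * ‖Δ h j‖ := by
      refine (Finset.abs_sum_le_sum_abs _ _).trans ?_
      apply Finset.sum_le_sum
      intro i _
      rw [abs_mul]
      apply mul_le_mul
      · simpa [Real.norm_eq_abs] using norm_le_pi_norm (a h j) i
      · simpa [Real.norm_eq_abs] using norm_le_pi_norm (Δ h j) i
      · exact abs_nonneg _
      · exact norm_nonneg _
    simp only [Finset.sum_const, Finset.card_univ, Fintype.card_fin, nsmul_eq_mul] at h1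
    refine h1.trans ?_
    apply mul_le_mul_of_nonneg_left _ (by positivity)
    calc ‖a h j‖ * ‖Δ h j‖ ≤ (C₁ * h ^ j) * (C₂ * h ^ (2*k - j)) := by
          apply mul_le_mul (hbnda h hh hhh j hj) (hbndΔ h hh hhh j hj) (norm_nonneg _)
          positivity
      _ = C₁ * C₂ * h ^ (2*k) := by
          have hp : h ^ j * h ^ (2*k - j) = h ^ (2*k) := by
            rw [← pow_add]; congr 1; omega
          rw [show C₁ * h ^ j * (C₂ * h ^ (2*k - j))
            = C₁ * C₂ * (h ^ j * h ^ (2*k - j)) from by ring, hp]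
  calc |h * ∑ j ∈ Finset.range s, -(a h j ⬝ᵥ Δ h j)|
      ≤ h * ∑ j ∈ Finset.range s, |a h j ⬝ᵥ Δ h j| := by
        rw [abs_mul, abs_of_pos hh]
        apply mul_le_mul_of_nonneg_left _ hh.le
        refine (Finset.abs_sum_le_sum_abs _ _).trans ?_
        simp
    _ ≤ h * ∑ j ∈ Finset.range s, (n : ℝ) * (C₁ * C₂ * h ^ (2*k)) := by
        apply mul_le_mul_of_nonneg_left (Finset.sum_le_sum hbound) hh.le
    _ = (n : ℝ) * s * C₁ * C₂ * h ^ (2*k+1) := by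
        simp only [Finset.sum_const, Finset.card_range, nsmul_eq_mul]
        ring
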